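/- arXiv:1406.6894 — 4 statements merged into one kernel-verified Lean document; each statement's English description precedes it below -/
import Mathlib

section
/- Let L/K be a finite Galois extension of local or global fields with nonabelian Galois group G, and let B be a G-stable fractional ideal of L. Then B is free over its associated order A_{K[G]} in the group algebra K[G] if and only if B is free over its associated order A_λ in the Hopf algebra H_λ giving the canonical nonclassical Hopf–Galois structure on L/K. -/
/- `L/K` is a finite Galois extension with Galois group `G = L ≃ₐ[K] L`.
The group algebra `K[G]` acts on `L` by `(∑ c_σ σ) • x = ∑ c_σ σ(x)`. -/
noncomputable def kAct (K L : Type*) [Field K] [Field L] [Algebra K L]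
    (z : MonoidAlgebra K (L ≃ₐ[K] L)) (x : L) : L :=
  z.coeff.sum fun σ c => c • σ x

/- `L[G]` acts `K`-linearly on `L` by `(∑ c_τ τ) · x = ∑ c_τ τ⁻¹(x)`. -/
noncomputable def lAct (K L : Type*) [Field K] [Field L] [Algebra K L]
    (z : MonoidAlgebra L (L ≃ₐ[K] L)) (x : L) : L :=
  z.coeff.sum fun τ c => c * τ⁻¹ x

/- The twisted action of `G` on `L[G]`: `σ ∗ (c τ) = σ(c) (στσ⁻¹)`. -/
noncomputable def twist (K L : Type*) [Field K] [Field L] [Algebra K L]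
    (σ : L ≃ₐ[K] L) (z : MonoidAlgebra L (L ≃ₐ[K] L)) :
    MonoidAlgebra L (L ≃ₐ[K] L) :=
  z.coeff.sum fun τ c => MonoidAlgebra.single (σ * τ * σ⁻¹) (σ c)

/- `H_λ = L[G]^G`, the Hopf algebra giving the canonical nonclassical
Hopf–Galois structure. -/
def Hlambda (K L : Type*) [Field K] [Field L] [Algebra K L] :
    Set (MonoidAlgebra L (L ≃ₐ[K] L)) :=
  {h | ∀ σ : L ≃ₐ[K] L, twist K L σ h = h}

section Aux

variable {K L : Type*} [Field K] [Field L] [Algebra K L]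

/-- The `K`-algebra map `K[G] → End_K(L)` realizing `kAct`. -/
noncomputable def kA (K L : Type*) [Field K] [Field L] [Algebra K L] :
    MonoidAlgebra K (L ≃ₐ[K] L) →ₐ[K] Module.End K L :=
  MonoidAlgebra.lift K _ _
    { toFun := fun σ => σ.toLinearMap
      map_one' := by ext x; rfl
      map_mul' := fun σ τ => by ext x; rfl }

theorem kA_apply (z : MonoidAlgebra K (L ≃ₐ[K] L)) (x : L) :
    kA K L z x = kAct K L z x := by
  rw [kA, MonoidAlgebra.lift_apply, kAct]
  rw [Finsupp.sum, Finsupp.sum, LinearMap.coe_sum, Finset.sum_apply]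
  simp

/-- The `L`-linear map `L[G] → Hom_K(L,L)` realizing `lAct`. -/
noncomputable def lA (K L : Type*) [Field K] [Field L] [Algebra K L] :
    MonoidAlgebra L (L ≃ₐ[K] L) →ₗ[L] (L →ₗ[K] L) :=
  Finsupp.lsum L (fun τ => LinearMap.toSpanSingleton L (L →ₗ[K] L) (τ⁻¹ : L ≃ₐ[K] L).toLinearMap)
    ∘ₗ (MonoidAlgebra.coeffLinearEquiv L).toLinearMap

theorem lA_apply (z : MonoidAlgebra L (L ≃ₐ[K] L)) (x : L) :
    lA K L z x = lAct K L z x := by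
  rw [lA, LinearMap.comp_apply, LinearEquiv.coe_coe, MonoidAlgebra.coeffLinearEquiv_apply]
  erw [Finsupp.lsum_apply]; rw [lAct]
  rw [Finsupp.sum, Finsupp.sum, LinearMap.coe_sum, Finset.sum_apply]
  simp [LinearMap.toSpanSingleton_apply, smul_eq_mul]

theorem kAct_single (σ : L ≃ₐ[K] L) (c : K) (x : L) :
    kAct K L (MonoidAlgebra.single σ c) x = c • σ x :=
  Finsupp.sum_single_index (by simp)

theorem lAct_single (τ : L ≃ₐ[K] L) (c : L) (x : L) :
    lAct K L (MonoidAlgebra.single τ c) x = c * τ⁻¹ x :=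
  Finsupp.sum_single_index (by simp)

theorem twist_single (σ τ : L ≃ₐ[K] L) (c : L) :
    twist K L σ (MonoidAlgebra.single τ c) = MonoidAlgebra.single (σ * τ * σ⁻¹) (σ c) :=
  Finsupp.sum_single_index (by simp)

/-- `twist` as a `K`-linear map. -/
noncomputable def twistLin (σ : L ≃ₐ[K] L) :
    MonoidAlgebra L (L ≃ₐ[K] L) →ₗ[K] MonoidAlgebra L (L ≃ₐ[K] L) :=
  Finsupp.lsum K (fun τ =>
    ((MonoidAlgebra.lsingle (σ * τ * σ⁻¹) : L →ₗ[L] MonoidAlgebra L (L ≃ₐ[K] L)).restrictScalars K)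
      ∘ₗ (σ.toLinearMap : L →ₗ[K] L)) ∘ₗ (MonoidAlgebra.coeffLinearEquiv K).toLinearMap

theorem twistLin_apply (σ : L ≃ₐ[K] L) (z : MonoidAlgebra L (L ≃ₐ[K] L)) :
    twistLin σ z = twist K L σ z := by
  rw [twistLin, LinearMap.comp_apply, LinearEquiv.coe_coe, MonoidAlgebra.coeffLinearEquiv_apply]
  erw [Finsupp.lsum_apply]; rw [twist]
  rfl

end Aux

section Aux2

variable {K L : Type*} [Field K] [Field L] [Algebra K L]

theorem apply_inv_apply (τ : L ≃ₐ[K] L) (x : L) : τ (τ⁻¹ x) = x := τ.apply_symm_apply x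

theorem inv_apply_apply (τ : L ≃ₐ[K] L) (x : L) : τ⁻¹ (τ x) = x := τ.symm_apply_apply x

theorem kAct_mul (z z' : MonoidAlgebra K (L ≃ₐ[K] L)) (x : L) :
    kAct K L (z * z') x = kAct K L z (kAct K L z' x) := by
  rw [← kA_apply, ← kA_apply, ← kA_apply, map_mul]
  rfl

theorem kAct_one (x : L) : kAct K L 1 x = x := by
  rw [← kA_apply, map_one]; rfl

theorem kAct_zero (x : L) : kAct K L 0 x = x * 0 := by
  rw [← kA_apply, map_zero, mul_zero]; rfl

theorem kAct_zero' (x : L) : kAct K L 0 x = 0 := by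
  rw [← kA_apply, map_zero]; rfl

theorem kAct_add (z z' : MonoidAlgebra K (L ≃ₐ[K] L)) (x : L) :
    kAct K L (z + z') x = kAct K L z x + kAct K L z' x := by
  rw [← kA_apply, ← kA_apply, ← kA_apply, map_add]; rfl

theorem kAct_smul (c : K) (z : MonoidAlgebra K (L ≃ₐ[K] L)) (x : L) :
    kAct K L (c • z) x = c • kAct K L z x := by
  rw [← kA_apply, ← kA_apply, map_smul]; rfl

theorem lAct_zero (x : L) : lAct K L 0 x = 0 := by
  rw [← lA_apply, map_zero]; rfl

theorem lAct_add (z z' : MonoidAlgebra L (L ≃ₐ[K] L)) (x : L) :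
    lAct K L (z + z') x = lAct K L z x + lAct K L z' x := by
  rw [← lA_apply, ← lA_apply, ← lA_apply, map_add]; rfl

theorem lAct_smul (c : L) (z : MonoidAlgebra L (L ≃ₐ[K] L)) (x : L) :
    lAct K L (c • z) x = c * lAct K L z x := by
  rw [← lA_apply, ← lA_apply, map_smul]; rfl

theorem twist_zero (σ : L ≃ₐ[K] L) : twist K L σ 0 = 0 :=
  Finsupp.sum_zero_index

theorem twist_add (σ : L ≃ₐ[K] L) (z w : MonoidAlgebra L (L ≃ₐ[K] L)) :
    twist K L σ (z + w) = twist K L σ z + twist K L σ w := by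
  rw [← twistLin_apply, ← twistLin_apply, ← twistLin_apply, map_add]

theorem twist_smul (σ : L ≃ₐ[K] L) (c : K) (z : MonoidAlgebra L (L ≃ₐ[K] L)) :
    twist K L σ (c • z) = c • twist K L σ z := by
  rw [← twistLin_apply, ← twistLin_apply, map_smul]

theorem twist_twist (σ μ : L ≃ₐ[K] L) (z : MonoidAlgebra L (L ≃ₐ[K] L)) :
    twist K L σ (twist K L μ z) = twist K L (σ * μ) z := by
  induction z using MonoidAlgebra.induction_linear with
  | zero => rw [twist_zero, twist_zero, twist_zero]
  | add f g hf hg => rw [twist_add, twist_add, twist_add, hf, hg]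
  | single τ c =>
      rw [twist_single, twist_single, twist_single]
      congr 1

theorem twist_one (z : MonoidAlgebra L (L ≃ₐ[K] L)) : twist K L 1 z = z := by
  induction z using MonoidAlgebra.induction_linear with
  | zero => rw [twist_zero]
  | add f g hf hg => rw [twist_add, hf, hg]
  | single τ c => rw [twist_single]; simp

theorem twist_mul (σ : L ≃ₐ[K] L) (z w : MonoidAlgebra L (L ≃ₐ[K] L)) :
    twist K L σ (z * w) = twist K L σ z * twist K L σ w := by
  induction z using MonoidAlgebra.induction_linear with
  | zero => simp [twist_zero]
  | add f g hf hg => rw [add_mul, twist_add, twist_add, hf, hg, add_mul]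
  | single τ c =>
      induction w using MonoidAlgebra.induction_linear with
      | zero => simp [twist_zero]
      | add f g hf hg => rw [mul_add, twist_add, twist_add, hf, hg, mul_add]
      | single μ d =>
          rw [MonoidAlgebra.single_mul_single, twist_single, twist_single, twist_single,
            MonoidAlgebra.single_mul_single, map_mul]
          congr 1
          group

theorem lAct_twist (σ : L ≃ₐ[K] L) (z : MonoidAlgebra L (L ≃ₐ[K] L)) (x : L) :
    lAct K L (twist K L σ z) x = σ (lAct K L z (σ⁻¹ x)) := by
  induction z using MonoidAlgebra.induction_linear with
  | zero => rw [twist_zero, lAct_zero, lAct_zero, map_zero]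
  | add f g hf hg => rw [twist_add, lAct_add, lAct_add, hf, hg, map_add]
  | single τ c =>
      rw [twist_single, lAct_single, lAct_single, map_mul]
      congr 1

theorem lAct_single_mul (τ : L ≃ₐ[K] L) (c : L) (v : MonoidAlgebra L (L ≃ₐ[K] L)) (x : L) :
    lAct K L (MonoidAlgebra.single τ c * v) x = c * lAct K L v (τ⁻¹ x) := by
  induction v using MonoidAlgebra.induction_linear with
  | zero => rw [mul_zero, lAct_zero, lAct_zero, mul_zero]
  | add f g hf hg => rw [mul_add, lAct_add, lAct_add, hf, hg, mul_add]
  | single μ d =>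
      rw [MonoidAlgebra.single_mul_single, lAct_single, lAct_single, mul_assoc]
      have h1 : (τ * μ)⁻¹ = μ⁻¹ * τ⁻¹ := by group
      rw [h1]
      rfl

theorem lAct_mul_of_mem {h : MonoidAlgebra L (L ≃ₐ[K] L)} (hh : h ∈ Hlambda K L)
    (z : MonoidAlgebra L (L ≃ₐ[K] L)) (x : L) :
    lAct K L (z * h) x = lAct K L z (lAct K L h x) := by
  induction z using MonoidAlgebra.induction_linear with
  | zero => rw [zero_mul, lAct_zero, lAct_zero]
  | add f g hf hg => rw [add_mul, lAct_add, lAct_add, hf, hg]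
  | single τ c =>
      rw [lAct_single_mul, lAct_single]
      congr 1
      have := lAct_twist (K := K) (L := L) τ⁻¹ h (τ⁻¹ x)
      rw [hh τ⁻¹] at this
      rw [this]
      congr 1
      rw [inv_apply_apply τ⁻¹]

theorem sigma_lAct {h : MonoidAlgebra L (L ≃ₐ[K] L)} (hh : h ∈ Hlambda K L)
    (σ : L ≃ₐ[K] L) (x : L) :
    σ (lAct K L h x) = lAct K L h (σ x) := by
  have := lAct_twist (K := K) (L := L) σ h (σ x)
  rw [hh σ] at this
  rw [this]
  congr 1
  rw [inv_apply_apply]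

theorem kAct_lAct_comm {h : MonoidAlgebra L (L ≃ₐ[K] L)} (hh : h ∈ Hlambda K L)
    (z : MonoidAlgebra K (L ≃ₐ[K] L)) (x : L) :
    kAct K L z (lAct K L h x) = lAct K L h (kAct K L z x) := by
  induction z using MonoidAlgebra.induction_linear with
  | zero => rw [kAct_zero', kAct_zero', ← lA_apply, map_zero]
  | add f g hf hg =>
      rw [kAct_add, kAct_add, hf, hg, ← lA_apply, ← lA_apply, ← lA_apply, map_add]
  | single σ c =>
      rw [kAct_single, kAct_single, sigma_lAct hh σ x, ← lA_apply, ← lA_apply,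
        LinearMap.map_smul]

theorem Hlambda.zero_mem : (0 : MonoidAlgebra L (L ≃ₐ[K] L)) ∈ Hlambda K L :=
  fun σ => twist_zero σ

theorem Hlambda.add_mem {h h' : MonoidAlgebra L (L ≃ₐ[K] L)} (hh : h ∈ Hlambda K L)
    (hh' : h' ∈ Hlambda K L) : h + h' ∈ Hlambda K L :=
  fun σ => by rw [twist_add, hh σ, hh' σ]

theorem Hlambda.smul_mem {h : MonoidAlgebra L (L ≃ₐ[K] L)} (c : K) (hh : h ∈ Hlambda K L) :
    c • h ∈ Hlambda K L :=
  fun σ => by rw [twist_smul, hh σ]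

theorem Hlambda.one_mem : (1 : MonoidAlgebra L (L ≃ₐ[K] L)) ∈ Hlambda K L := by
  intro σ
  rw [MonoidAlgebra.one_def, twist_single]
  simp

theorem Hlambda.mul_mem {h h' : MonoidAlgebra L (L ≃ₐ[K] L)} (hh : h ∈ Hlambda K L)
    (hh' : h' ∈ Hlambda K L) : h * h' ∈ Hlambda K L :=
  fun σ => by rw [twist_mul, hh σ, hh' σ]

end Aux2

section Aux3

variable {K L : Type*} [Field K] [Field L] [Algebra K L] [FiniteDimensional K L]

theorem lAct_sum_univ (z : MonoidAlgebra L (L ≃ₐ[K] L)) (x : L) :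
    lAct K L z x = ∑ τ : L ≃ₐ[K] L, z.coeff τ * τ⁻¹ x := by
  rw [lAct]
  exact Finsupp.sum_fintype _ _ fun τ => zero_mul _

theorem kAct_sum_univ (z : MonoidAlgebra K (L ≃ₐ[K] L)) (x : L) :
    kAct K L z x = ∑ σ : L ≃ₐ[K] L, z.coeff σ • σ x := by
  rw [kAct]
  exact Finsupp.sum_fintype _ _ fun σ => zero_smul _ _

theorem autCoe_injective :
    Function.Injective (fun σ : L ≃ₐ[K] L => (σ : L →* L)) := by
  intro σ τ h
  ext x
  exact congrFun (congrArg (fun f => f.toFun) h) x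

theorem autLinearIndependent :
    LinearIndependent L (fun σ : L ≃ₐ[K] L => (⇑σ : L → L)) :=
  (linearIndependent_monoidHom L L).comp
    (fun σ : L ≃ₐ[K] L => (σ : L →* L)) autCoe_injective

theorem autInvLinearIndependent :
    LinearIndependent L (fun σ : L ≃ₐ[K] L => (⇑σ⁻¹ : L → L)) :=
  autLinearIndependent.comp (fun σ => σ⁻¹) fun _ _ h => inv_injective h

theorem lA_apply_eq_zero {z : MonoidAlgebra L (L ≃ₐ[K] L)} (hz : lA K L z = 0) : z = 0 := by
  have key := Fintype.linearIndependent_iff.mp (autInvLinearIndependent (K := K) (L := L))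
    (fun τ => z.coeff τ) ?_
  · ext τ
    exact key τ
  · funext x
    rw [Finset.sum_apply]
    have : ∀ τ : L ≃ₐ[K] L, (z.coeff τ • (⇑τ⁻¹ : L → L)) x = z.coeff τ * τ⁻¹ x := fun τ => rfl
    rw [Finset.sum_congr rfl fun τ _ => this τ, ← lAct_sum_univ, ← lA_apply, hz]
    rfl

theorem lA_injective : Function.Injective (lA K L) := by
  intro a b hab
  have := lA_apply_eq_zero (z := a - b) (by rw [map_sub, hab, sub_self])
  exact sub_eq_zero.mp this

theorem kA_injective : Function.Injective (kA K L) := by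
  have h0 : ∀ z : MonoidAlgebra K (L ≃ₐ[K] L), kA K L z = 0 → z = 0 := by
    intro z hz
    have key := Fintype.linearIndependent_iff.mp (autLinearIndependent (K := K) (L := L))
      (fun σ => algebraMap K L (z.coeff σ)) ?_
    · ext σ
      exact (algebraMap K L).injective (by rw [key σ]; simp)
    · funext x
      rw [Finset.sum_apply]
      have : ∀ σ : L ≃ₐ[K] L, (algebraMap K L (z.coeff σ) • (⇑σ : L → L)) x = z.coeff σ • σ x := by
        intro σ
        rw [Pi.smul_apply, smul_eq_mul, Algebra.smul_def]
      rw [Finset.sum_congr rfl fun σ _ => this σ, ← kAct_sum_univ, ← kA_apply, hz]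
      rfl
  intro a b hab
  have := h0 (a - b) (by rw [map_sub, hab, sub_self])
  exact sub_eq_zero.mp this

theorem lA_surjective [IsGalois K L] : Function.Surjective (lA K L) := by
  haveI : Module.Finite L (MonoidAlgebra L (L ≃ₐ[K] L)) :=
    Module.Finite.of_basis (MonoidAlgebra.basis _ L)
  haveI : Module.Finite K (MonoidAlgebra L (L ≃ₐ[K] L)) :=
    Module.Finite.trans L _
  have h2 : Module.finrank L (MonoidAlgebra L (L ≃ₐ[K] L)) = Fintype.card (L ≃ₐ[K] L) :=
    Module.finrank_eq_card_basis (MonoidAlgebra.basis _ L)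
  have hrank : Module.finrank K (MonoidAlgebra L (L ≃ₐ[K] L)) =
      Module.finrank K (L →ₗ[K] L) := by
    rw [Module.finrank_linearMap, ← Module.finrank_mul_finrank K L
      (MonoidAlgebra L (L ≃ₐ[K] L)), h2, ← Nat.card_eq_fintype_card, IsGalois.card_aut_eq_finrank]
  have hinj : Function.Injective ((lA K L).restrictScalars K) := lA_injective
  have hsurj := (LinearMap.injective_iff_surjective_of_finrank_eq_finrank hrank).mp hinj
  exact hsurj

end Aux3

section Aux4

variable {K L : Type*} [Field K] [Field L] [Algebra K L] [FiniteDimensional K L]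

noncomputable def gElem (ρ : L ≃ₐ[K] L) (x : L) : MonoidAlgebra L (L ≃ₐ[K] L) :=
  ∑ σ : L ≃ₐ[K] L, twist K L σ (MonoidAlgebra.single ρ x)

theorem gElem_mem (ρ : L ≃ₐ[K] L) (x : L) : gElem (K := K) ρ x ∈ Hlambda K L := by
  intro μ
  rw [gElem, ← twistLin_apply, map_sum]
  simp only [twistLin_apply, twist_twist]
  exact Fintype.sum_equiv (Equiv.mulLeft μ) _ _ fun σ => rfl

theorem lAct_gElem (ρ : L ≃ₐ[K] L) (x u : L) :
    lAct K L (gElem (K := K) ρ x) u = ∑ σ : L ≃ₐ[K] L, σ x * (σ * ρ⁻¹ * σ⁻¹) u := by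
  rw [← lA_apply, gElem, map_sum, LinearMap.sum_apply]
  refine Finset.sum_congr rfl fun σ _ => ?_
  rw [lA_apply, lAct_twist, lAct_single, map_mul]
  rfl

/-- index transform. -/
def idxF {K L : Type*} [Field K] [Field L] [Algebra K L] (ρ : L ≃ₐ[K] L)
    (q : (L ≃ₐ[K] L) × (L ≃ₐ[K] L)) : L ≃ₐ[K] L :=
  q.2⁻¹ * q.1 * ρ⁻¹ * q.1⁻¹

def jE {K L : Type*} [Field K] [Field L] [Algebra K L] (ρ : L ≃ₐ[K] L) :
    ((L ≃ₐ[K] L) × (L ≃ₐ[K] L)) ≃ ((L ≃ₐ[K] L) × (L ≃ₐ[K] L)) where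
  toFun p := (p.1⁻¹ * p.2, p.1⁻¹ * (p.2 * ρ⁻¹ * p.2⁻¹))
  invFun q := (idxF ρ q, idxF ρ q * q.1)
  left_inv p := Prod.ext (by simp only [idxF]; group) (by simp only [idxF]; group)
  right_inv q := Prod.ext (by simp only [idxF]; group) (by simp only [idxF]; group)

def jE2 {K L : Type*} [Field K] [Field L] [Algebra K L] (ρ : L ≃ₐ[K] L) :
    ((L ≃ₐ[K] L) × (L ≃ₐ[K] L)) ≃ ((L ≃ₐ[K] L) × (L ≃ₐ[K] L)) where
  toFun p := (p.1, p.1 * ρ⁻¹ * p.1⁻¹ * p.2⁻¹)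
  invFun q := (q.1, idxF ρ q)
  left_inv p := Prod.ext rfl (by simp only [idxF]; group)
  right_inv q := Prod.ext rfl (by simp only [idxF]; group)

theorem coeff_fixed [IsGalois K L] (w : MonoidAlgebra L (L ≃ₐ[K] L))
    (hw : ∀ h ∈ Hlambda K L, ∀ u : L, lAct K L w (lAct K L h u) = lAct K L h (lAct K L w u))
    (ν τ₀ : L ≃ₐ[K] L) : ν (w.coeff τ₀) = w.coeff τ₀ := by
  classical
  set ρ : L ≃ₐ[K] L := ν⁻¹ with hρ
  set χ : (L ≃ₐ[K] L) × (L ≃ₐ[K] L) → (L × L) →* L := fun q =>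
    ((q.1 : L →* L).comp (MonoidHom.fst L L)) * ((q.2 : L →* L).comp (MonoidHom.snd L L))
    with hχ
  have χ_apply : ∀ q (x u : L), χ q (x, u) = q.1 x * q.2 u := fun q x u => rfl
  have χinj : Function.Injective χ := by
    intro q q' h
    have h1 : ∀ x : L, q.1 x = q'.1 x := by
      intro x
      have hh := DFunLike.congr_fun h (x, (1 : L))
      rwa [χ_apply, χ_apply, map_one, map_one, mul_one, mul_one] at hh
    have h2 : ∀ u : L, q.2 u = q'.2 u := by
      intro u
      have hh := DFunLike.congr_fun h ((1 : L), u)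
      rwa [χ_apply, χ_apply, map_one, map_one, one_mul, one_mul] at hh
    exact Prod.ext (AlgEquiv.ext h1) (AlgEquiv.ext h2)
  have LI := (linearIndependent_monoidHom (L × L) L).comp χ χinj
  have key : ∀ x u : L,
      ∑ q : (L ≃ₐ[K] L) × (L ≃ₐ[K] L),
        (w.coeff (idxF ρ q) - (q.1 * ρ⁻¹ * q.1⁻¹) (w.coeff (idxF ρ q))) * χ q (x, u) = 0 := by
    intro x u
    have main := hw (gElem ρ x) (gElem_mem ρ x) u
    have hL : lAct K L w (lAct K L (gElem (K := K) ρ x) u)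
        = ∑ q : (L ≃ₐ[K] L) × (L ≃ₐ[K] L), w.coeff (idxF ρ q) * χ q (x, u) := by
      rw [lAct_gElem, lAct_sum_univ]
      have step1 : ∀ τ : L ≃ₐ[K] L,
          w.coeff τ * τ⁻¹ (∑ σ : L ≃ₐ[K] L, σ x * (σ * ρ⁻¹ * σ⁻¹) u)
          = ∑ σ : L ≃ₐ[K] L, w.coeff τ * ((τ⁻¹ * σ) x * (τ⁻¹ * (σ * ρ⁻¹ * σ⁻¹)) u) := by
        intro τ
        rw [map_sum, Finset.mul_sum]
        refine Finset.sum_congr rfl fun σ _ => ?_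
        rw [map_mul]
        rfl
      rw [Finset.sum_congr rfl fun τ _ => step1 τ,
        ← Function.Bijective.sum_comp (jE ρ).bijective
          (fun q => w.coeff (idxF ρ q) * χ q (x, u)),
        Fintype.sum_prod_type]
      refine Finset.sum_congr rfl fun τ _ => Finset.sum_congr rfl fun σ _ => ?_
      simp only [jE, Equiv.coe_fn_mk]
      rw [χ_apply]
      have hidx : idxF ρ (τ⁻¹ * σ, τ⁻¹ * (σ * ρ⁻¹ * σ⁻¹)) = τ := by
        simp only [idxF]; group
      rw [hidx]
    have hR : lAct K L (gElem (K := K) ρ x) (lAct K L w u)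
        = ∑ q : (L ≃ₐ[K] L) × (L ≃ₐ[K] L), (q.1 * ρ⁻¹ * q.1⁻¹) (w.coeff (idxF ρ q)) * χ q (x, u) := by
      rw [lAct_gElem]
      have step2 : ∀ σ : L ≃ₐ[K] L,
          σ x * (σ * ρ⁻¹ * σ⁻¹) (lAct K L w u)
          = ∑ τ : L ≃ₐ[K] L, (σ * ρ⁻¹ * σ⁻¹) (w.coeff τ) * (σ x * (σ * ρ⁻¹ * σ⁻¹ * τ⁻¹) u) := by
        intro σ
        rw [lAct_sum_univ, map_sum, Finset.mul_sum]
        refine Finset.sum_congr rfl fun τ _ => ?_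
        rw [map_mul, mul_left_comm]
        rfl
      rw [Finset.sum_congr rfl fun σ _ => step2 σ,
        ← Function.Bijective.sum_comp (jE2 ρ).bijective
          (fun q => (q.1 * ρ⁻¹ * q.1⁻¹) (w.coeff (idxF ρ q)) * χ q (x, u)),
        Fintype.sum_prod_type]
      refine Finset.sum_congr rfl fun σ _ => Finset.sum_congr rfl fun τ _ => ?_
      simp only [jE2, Equiv.coe_fn_mk]
      rw [χ_apply]
      have hidx : idxF ρ (σ, σ * ρ⁻¹ * σ⁻¹ * τ⁻¹) = τ := by
        simp only [idxF]; group
      rw [hidx]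
    rw [hL, hR] at main
    rw [Finset.sum_congr rfl
      (fun q _ => sub_mul (w.coeff (idxF ρ q)) ((q.1 * ρ⁻¹ * q.1⁻¹) (w.coeff (idxF ρ q))) (χ q (x, u))),
      Finset.sum_sub_distrib, main, sub_self]
  have hcoef := Fintype.linearIndependent_iff.mp LI
    (fun q => w.coeff (idxF ρ q) - (q.1 * ρ⁻¹ * q.1⁻¹) (w.coeff (idxF ρ q))) ?_
  · have hq := hcoef ((1 : L ≃ₐ[K] L), ν * τ₀⁻¹)
    have hidx : idxF ρ ((1 : L ≃ₐ[K] L), ν * τ₀⁻¹) = τ₀ := by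
      simp only [idxF, hρ]; group
    rw [hidx] at hq
    have hco : ((1 : L ≃ₐ[K] L) * ρ⁻¹ * (1 : L ≃ₐ[K] L)⁻¹) = ν := by
      rw [hρ]; group
    rw [hco] at hq
    exact (sub_eq_zero.mp hq).symm
  · funext p
    obtain ⟨x, u⟩ := p
    rw [Finset.sum_apply]
    have : ∀ q : (L ≃ₐ[K] L) × (L ≃ₐ[K] L),
        ((w.coeff (idxF ρ q) - (q.1 * ρ⁻¹ * q.1⁻¹) (w.coeff (idxF ρ q))) • ((fun f : (L × L) →* L => ⇑f) ∘ χ) q) (x, u)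
        = (w.coeff (idxF ρ q) - (q.1 * ρ⁻¹ * q.1⁻¹) (w.coeff (idxF ρ q))) * χ q (x, u) := fun q => rfl
    rw [Finset.sum_congr rfl fun q _ => this q, key x u]
    rfl

end Aux4

section Aux5

variable {K L R : Type*} [Field K] [Field L] [Algebra K L]
  [CommRing R] [IsDedekindDomain R] [Algebra R K] [IsFractionRing R K]
  [Algebra R L] [IsScalarTower R K L]

theorem mem_range_of_fixed [FiniteDimensional K L] [IsGalois K L] {a : L}
    (ha : ∀ σ : L ≃ₐ[K] L, σ a = a) : a ∈ Set.range (algebraMap K L) := by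
  have h1 : a ∈ IntermediateField.fixedField (⊤ : Subgroup (L ≃ₐ[K] L)) := fun g => ha g
  rw [← IntermediateField.fixingSubgroup_bot (F := K) (E := L), IsGalois.fixedField_fixingSubgroup] at h1
  exact IntermediateField.mem_bot.mp h1

include K in
theorem algebraMapRL_injective : Function.Injective (algebraMap R L) := by
  rw [IsScalarTower.algebraMap_eq R K L]
  exact (algebraMap K L).injective.comp (IsFractionRing.injective R K)

theorem B_Rmul (B : Submodule (integralClosure R L) L) (r : R) {b : L} (hb : b ∈ B) :
    algebraMap R L r * b ∈ B := by
  have h := B.smul_mem (⟨algebraMap R L r, isIntegral_algebraMap⟩ : integralClosure R L) hb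
  rwa [Subalgebra.smul_def] at h

theorem B_Omul (B : Submodule (integralClosure R L) L) (o : integralClosure R L) {b : L}
    (hb : b ∈ B) : (o : L) * b ∈ B := by
  have h := B.smul_mem o hb
  rwa [Subalgebra.smul_def] at h

theorem B_scale [FiniteDimensional K L] (B : Submodule (integralClosure R L) L) {b₀ : L}
    (hb₀ : b₀ ∈ B) (hb₀0 : b₀ ≠ 0) (x : L) :
    ∃ r : R, r ≠ 0 ∧ algebraMap R L r * x ∈ B := by
  have halg : IsAlgebraic R (x * b₀⁻¹) :=
    (IsFractionRing.isAlgebraic_iff R K L).mpr (Algebra.IsAlgebraic.isAlgebraic _)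
  obtain ⟨r, hr0, hint⟩ := halg.exists_integral_multiple
  obtain ⟨o, r, hr0, hro⟩ : ∃ o : integralClosure R L, ∃ r : R, r ≠ 0 ∧
      x * b₀⁻¹ * algebraMap R L r = o :=
    ⟨⟨r • (x * b₀⁻¹), hint⟩, r, hr0, (Algebra.smul_def r (x * b₀⁻¹)).trans (mul_comm _ _) |>.symm⟩
  refine ⟨r, hr0, ?_⟩
  have hx : algebraMap R L r * x = (o : L) * b₀ := by
    rw [← hro]
    field_simp
  rw [hx]
  exact B_Omul B o hb₀

theorem B_spanK [FiniteDimensional K L] (B : Submodule (integralClosure R L) L) {b₀ : L}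
    (hb₀ : b₀ ∈ B) (hb₀0 : b₀ ≠ 0) : Submodule.span K (B : Set L) = ⊤ := by
  rw [Submodule.eq_top_iff']
  intro x
  obtain ⟨r, hr0, hrx⟩ := B_scale (K := K) B hb₀ hb₀0 x
  have hK0 : algebraMap R K r ≠ 0 := fun h =>
    hr0 (IsFractionRing.injective R K (by rw [h, map_zero]))
  have hL0 : algebraMap R L r ≠ 0 := fun h => hr0 (algebraMapRL_injective (K := K)
    (show algebraMap R L r = algebraMap R L 0 by rw [h, map_zero]))
  have : x = (algebraMap R K r)⁻¹ • (algebraMap R L r * x) := by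
    rw [Algebra.smul_def, map_inv₀, ← IsScalarTower.algebraMap_apply R K L, ← mul_assoc,
      inv_mul_cancel₀ hL0, one_mul]
  rw [this]
  exact Submodule.smul_mem _ _ (Submodule.subset_span hrx)

theorem B_fg [FiniteDimensional K L] [IsGalois K L] (B : Submodule (integralClosure R L) L)
    (hfrac : ∃ d : integralClosure R L, d ≠ 0 ∧ ∀ b ∈ B, (d : L) * b ∈ integralClosure R L) :
    (B.restrictScalars R).FG := by
  obtain ⟨d, hd0, hd⟩ := hfrac
  have hdL : (d : L) ≠ 0 := fun h => hd0 (Subtype.ext h)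
  haveI : IsNoetherian R (integralClosure R L) := IsIntegralClosure.isNoetherian R K L _
  set m : L →ₗ[R] L := LinearMap.mulLeft R (d : L) with hm
  have hminj : Function.Injective m := fun a b hab => mul_left_cancel₀ hdL hab
  apply Submodule.fg_of_fg_map_injective m hminj
  set T := Submodule.map m (B.restrictScalars R) with hT
  set val : integralClosure R L →ₗ[R] L :=
    (IsScalarTower.toAlgHom R (integralClosure R L) L).toLinearMap with hval
  have hvalinj : Function.Injective val := Subtype.coe_injective
  have hTrange : T ≤ LinearMap.range val := by
    rintro y ⟨b, hb, rfl⟩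
    exact ⟨⟨(d : L) * b, hd b hb⟩, rfl⟩
  have hTeq : Submodule.map val (Submodule.comap val T) = T := by
    rw [Submodule.map_comap_eq, inf_eq_right.mpr hTrange]
  rw [← hTeq]
  exact (IsNoetherian.noetherian _).map val

theorem B_denom [FiniteDimensional K L] [IsGalois K L] (B : Submodule (integralClosure R L) L)
    (hfrac : ∃ d : integralClosure R L, d ≠ 0 ∧ ∀ b ∈ B, (d : L) * b ∈ integralClosure R L)
    {b₀ : L} (hb₀ : b₀ ∈ B) (hb₀0 : b₀ ≠ 0) (φ : L →ₗ[K] L) :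
    ∃ r : R, r ≠ 0 ∧ ∀ y ∈ B, algebraMap R L r * φ y ∈ B := by
  classical
  obtain ⟨s, hs⟩ := B_fg (K := K) B hfrac
  choose F hF0 hFB using fun x : L => B_scale (K := K) B hb₀ hb₀0 x
  refine ⟨∏ i ∈ s, F (φ i), Finset.prod_ne_zero_iff.mpr fun i _ => hF0 _, ?_⟩
  intro y hy
  have hyspan : y ∈ Submodule.span R (s : Set L) := by
    rw [hs]; exact hy
  clear hy
  induction hyspan using Submodule.span_induction with
  | mem i hi =>
      rw [← Finset.mul_prod_erase s (fun i => F (φ i)) hi, map_mul, mul_comm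
        (algebraMap R L (F (φ i))), mul_assoc]
      exact B_Rmul B _ (hFB (φ i))
  | zero =>
      rw [map_zero, mul_zero]; exact B.zero_mem
  | add a b _ _ ha hb =>
      rw [map_add, mul_add]; exact B.add_mem ha hb
  | smul c a _ hc =>
      have : φ (c • a) = algebraMap R L c * φ a := by
        rw [algebra_compatible_smul K c a, map_smul, Algebra.smul_def,
          ← IsScalarTower.algebraMap_apply R K L]
      rw [this, mul_left_comm]
      exact B_Rmul B _ hc

end Aux5

section Aux6

variable {K L : Type*} [Field K] [Field L] [Algebra K L]

theorem lAct_one (x : L) : lAct K L 1 x = x := by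
  rw [MonoidAlgebra.one_def, lAct_single, inv_one]
  simp

theorem kAct_sub {K L : Type*} [Field K] [Field L] [Algebra K L]
    (z z' : MonoidAlgebra K (L ≃ₐ[K] L)) (x : L) :
    kAct K L (z - z') x = kAct K L z x - kAct K L z' x := by
  rw [← kA_apply, ← kA_apply, ← kA_apply, map_sub]; rfl

theorem lAct_sub {K L : Type*} [Field K] [Field L] [Algebra K L]
    (z z' : MonoidAlgebra L (L ≃ₐ[K] L)) (x : L) :
    lAct K L (z - z') x = lAct K L z x - lAct K L z' x := by
  rw [← lA_apply, ← lA_apply, ← lA_apply, map_sub]; rfl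

theorem lAct_smulK (c : K) (z : MonoidAlgebra L (L ≃ₐ[K] L)) (x : L) :
    lAct K L (c • z) x = c • lAct K L z x := by
  rw [← algebraMap_smul L c z, lAct_smul, Algebra.smul_def]

/-- `H_λ` as a `K`-submodule of `L[G]`. -/
def HlambdaSub (K L : Type*) [Field K] [Field L] [Algebra K L] :
    Submodule K (MonoidAlgebra L (L ≃ₐ[K] L)) where
  carrier := Hlambda K L
  add_mem' := Hlambda.add_mem
  zero_mem' := Hlambda.zero_mem
  smul_mem' := fun c _ h => Hlambda.smul_mem c h

variable {R : Type*} [CommRing R] [IsDedekindDomain R] [Algebra R K] [IsFractionRing R K]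
  [Algebra R L] [IsScalarTower R K L] [FiniteDimensional K L] [IsGalois K L]

theorem scale_mem_k (B : Submodule (integralClosure R L) L)
    (hfrac : ∃ d : integralClosure R L, d ≠ 0 ∧ ∀ b ∈ B, (d : L) * b ∈ integralClosure R L)
    {b₀ : L} (hb₀ : b₀ ∈ B) (hb₀0 : b₀ ≠ 0) (z : MonoidAlgebra K (L ≃ₐ[K] L)) :
    ∃ c : K, c ≠ 0 ∧ ∀ y ∈ B, kAct K L (c • z) y ∈ B := by
  obtain ⟨r, hr0, hrB⟩ := B_denom B hfrac hb₀ hb₀0 (kA K L z)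
  refine ⟨algebraMap R K r,
    fun h => hr0 (IsFractionRing.injective R K (by rw [h, map_zero])), ?_⟩
  intro y hy
  rw [kAct_smul, Algebra.smul_def, ← IsScalarTower.algebraMap_apply R K L, ← kA_apply]
  exact hrB y hy

theorem scale_mem_l (B : Submodule (integralClosure R L) L)
    (hfrac : ∃ d : integralClosure R L, d ≠ 0 ∧ ∀ b ∈ B, (d : L) * b ∈ integralClosure R L)
    {b₀ : L} (hb₀ : b₀ ∈ B) (hb₀0 : b₀ ≠ 0) (h : MonoidAlgebra L (L ≃ₐ[K] L)) :
    ∃ c : K, c ≠ 0 ∧ ∀ y ∈ B, lAct K L (c • h) y ∈ B := by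
  obtain ⟨r, hr0, hrB⟩ := B_denom B hfrac hb₀ hb₀0 ((lA K L h).restrictScalars K)
  refine ⟨algebraMap R K r,
    fun hh => hr0 (IsFractionRing.injective R K (by rw [hh, map_zero])), ?_⟩
  intro y hy
  rw [lAct_smulK, Algebra.smul_def, ← IsScalarTower.algebraMap_apply R K L, ← lA_apply]
  exact hrB y hy

end Aux6

section Main

variable (K L R : Type*) [Field K] [Field L] [Algebra K L]
  [CommRing R] [IsDedekindDomain R] [Algebra R K] [IsFractionRing R K]
  [Algebra R L] [IsScalarTower R K L]

/-- Let `L/K` be a finite Galois extension of local or global fields with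
nonabelian Galois group `G`, and let `B` be a `G`-stable fractional ideal of `L`.  Then
`B` is free over its associated order `A_{K[G]} = {z ∈ K[G] : z • B ⊆ B}` iff it is free
over its associated order `A_λ = {h ∈ H_λ : h · B ⊆ B}`, where freeness over an
associated order `A` means that there is `b ∈ B` for which `a ↦ a · b` is a bijection
from `A` onto `B`. -/
theorem free_over_AKG_iff_free_over_Alambda
    [FiniteDimensional K L] [IsGalois K L]
    (hnonab : ∃ σ τ : L ≃ₐ[K] L, σ * τ ≠ τ * σ)
    (B : Submodule (integralClosure R L) L)
    (hfrac : ∃ d : integralClosure R L, d ≠ 0 ∧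
      ∀ b ∈ B, (d : L) * b ∈ integralClosure R L)
    (hstable : ∀ σ : L ≃ₐ[K] L, σ '' (B : Set L) = (B : Set L)) :
    (∃ b, ∃ hb : b ∈ B, Function.Bijective
        (fun z : {z : MonoidAlgebra K (L ≃ₐ[K] L) // ∀ y ∈ B, kAct K L z y ∈ B} =>
          (⟨kAct K L z.1 b, z.2 b hb⟩ : B))) ↔
      (∃ b, ∃ hb : b ∈ B, Function.Bijective
        (fun h : {h : MonoidAlgebra L (L ≃ₐ[K] L) //
            h ∈ Hlambda K L ∧ ∀ y ∈ B, lAct K L h y ∈ B} =>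
          (⟨lAct K L h.1 b, h.2.2 b hb⟩ : B))) := by
  classical
  by_cases hB : B = ⊥
  · subst hB
    constructor
    · rintro ⟨b, hb, hbij⟩
      exfalso
      have hb0 : b = 0 := Submodule.mem_bot _ |>.mp hb
      have m0 : ∀ y ∈ (⊥ : Submodule (integralClosure R L) L), kAct K L 0 y ∈
          (⊥ : Submodule (integralClosure R L) L) := fun y _ => by
        rw [kAct_zero']; exact Submodule.zero_mem _
      have m1 : ∀ y ∈ (⊥ : Submodule (integralClosure R L) L), kAct K L 1 y ∈
          (⊥ : Submodule (integralClosure R L) L) := fun y hy => by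
        rw [kAct_one]; exact hy
      have heq := hbij.1 (a₁ := ⟨0, m0⟩) (a₂ := ⟨1, m1⟩) (Subtype.ext
        (show kAct K L 0 b = kAct K L 1 b by rw [kAct_zero', kAct_one, hb0]))
      exact zero_ne_one (congrArg Subtype.val heq)
    · rintro ⟨b, hb, hbij⟩
      exfalso
      have hb0 : b = 0 := Submodule.mem_bot _ |>.mp hb
      have m0 : (0 : MonoidAlgebra L (L ≃ₐ[K] L)) ∈ Hlambda K L ∧
          ∀ y ∈ (⊥ : Submodule (integralClosure R L) L), lAct K L 0 y ∈
          (⊥ : Submodule (integralClosure R L) L) :=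
        ⟨Hlambda.zero_mem, fun y _ => by rw [lAct_zero]; exact Submodule.zero_mem _⟩
      have m1 : (1 : MonoidAlgebra L (L ≃ₐ[K] L)) ∈ Hlambda K L ∧
          ∀ y ∈ (⊥ : Submodule (integralClosure R L) L), lAct K L 1 y ∈
          (⊥ : Submodule (integralClosure R L) L) :=
        ⟨Hlambda.one_mem, fun y hy => by rw [lAct_one]; exact hy⟩
      have heq := hbij.1 (a₁ := ⟨0, m0⟩) (a₂ := ⟨1, m1⟩) (Subtype.ext
        (show lAct K L 0 b = lAct K L 1 b by rw [lAct_zero, lAct_one, hb0]))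
      exact zero_ne_one (congrArg Subtype.val heq)
  · obtain ⟨b₀, hb₀B, hb₀0⟩ := Submodule.exists_mem_ne_zero_of_ne_bot hB
    have hspan : Submodule.span K (B : Set L) = ⊤ := B_spanK (K := K) B hb₀B hb₀0
    constructor
    -- FORWARD DIRECTION
    · rintro ⟨b, hb, hinj, hsurj⟩
      have hPhiInj : Function.Injective
          (fun z : MonoidAlgebra K (L ≃ₐ[K] L) => kAct K L z b) := by
        intro z z' hzz
        obtain ⟨c, hc0, hcB⟩ := scale_mem_k B hfrac hb₀B hb₀0 (z - z')
        have h0m : ∀ y ∈ B, kAct K L 0 y ∈ B := fun y _ => by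
          rw [kAct_zero']; exact B.zero_mem
        have hzz' : kAct K L z b = kAct K L z' b := hzz
        have him : kAct K L (c • (z - z')) b = kAct K L 0 b := by
          rw [kAct_zero', kAct_smul, kAct_sub, hzz', sub_self, smul_zero]
        have heq := hinj (a₁ := ⟨c • (z - z'), hcB⟩) (a₂ := ⟨0, h0m⟩) (Subtype.ext him)
        have h1 : c • (z - z') = 0 := congrArg Subtype.val heq
        rcases smul_eq_zero.mp h1 with h | h
        · exact absurd h hc0
        · exact sub_eq_zero.mp h
      set Phi : MonoidAlgebra K (L ≃ₐ[K] L) →ₗ[K] L :=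
        { toFun := fun z => kAct K L z b
          map_add' := fun z z' => kAct_add z z' b
          map_smul' := fun c z => kAct_smul c z b } with hPhi
      have hPhiSurj : Function.Surjective Phi := by
        rw [← LinearMap.range_eq_top]
        refine top_unique ?_
        rw [← hspan]
        refine Submodule.span_le.mpr fun y hy => ?_
        obtain ⟨z, hz⟩ := hsurj ⟨y, hy⟩
        exact ⟨z.1, congrArg Subtype.val hz⟩
      set e := LinearEquiv.ofBijective Phi ⟨hPhiInj, hPhiSurj⟩ with he
      refine ⟨b, hb, ?_, ?_⟩
      -- injectivity of the Hopf side map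
      · intro h h' hhh
        have hval : lAct K L h.1 b = lAct K L h'.1 b := congrArg Subtype.val hhh
        apply Subtype.ext
        apply lA_injective (K := K) (L := L)
        apply LinearMap.ext
        intro x
        obtain ⟨z, hz⟩ := hPhiSurj x
        have hz' : kAct K L z b = x := hz
        rw [lA_apply, lA_apply, ← hz', ← kAct_lAct_comm h.2.1 z b,
          ← kAct_lAct_comm h'.2.1 z b, hval]
      -- surjectivity of the Hopf side map
      · rintro ⟨y, hy⟩
        set Phiy : MonoidAlgebra K (L ≃ₐ[K] L) →ₗ[K] L :=
          { toFun := fun z => kAct K L z y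
            map_add' := fun z z' => kAct_add z z' y
            map_smul' := fun c z => kAct_smul c z y } with hPhiy
        set f : L →ₗ[K] L := Phiy ∘ₗ e.symm.toLinearMap with hf
        have hfb : ∀ z : MonoidAlgebra K (L ≃ₐ[K] L), f (kAct K L z b) = kAct K L z y := by
          intro z
          have h1 : kAct K L z b = e z := rfl
          have h2 : e.symm (e z) = z := e.symm_apply_apply z
          show Phiy (e.symm (kAct K L z b)) = kAct K L z y
          rw [h1, h2]
          rfl
        have hfcomm : ∀ (σ : L ≃ₐ[K] L) (x : L), f (σ x) = σ (f x) := by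
          intro σ x
          obtain ⟨z, hz⟩ := hPhiSurj x
          have hz' : kAct K L z b = x := hz
          rw [← hz']
          have h1 : σ (kAct K L z b) = kAct K L (MonoidAlgebra.single σ 1 * z) b := by
            rw [kAct_mul, kAct_single, one_smul]
          have h2 : σ (kAct K L z y) = kAct K L (MonoidAlgebra.single σ 1 * z) y := by
            rw [kAct_mul, kAct_single, one_smul]
          rw [h1, hfb, hfb, h2]
        obtain ⟨w, hw⟩ := lA_surjective (K := K) (L := L) f
        have hwact : ∀ x, lAct K L w x = f x := fun x => by rw [← lA_apply, hw]
        have hwH : w ∈ Hlambda K L := by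
          intro σ
          apply lA_injective (K := K) (L := L)
          apply LinearMap.ext
          intro x
          rw [lA_apply, lA_apply, lAct_twist, hwact, hwact, ← hfcomm, apply_inv_apply]
        have hwB : ∀ y' ∈ B, lAct K L w y' ∈ B := by
          intro y' hy'
          obtain ⟨a, ha⟩ := hsurj ⟨y', hy'⟩
          have hav : kAct K L a.1 b = y' := congrArg Subtype.val ha
          rw [← hav, hwact, hfb]
          exact a.2 y hy
        refine ⟨⟨w, hwH, hwB⟩, Subtype.ext ?_⟩
        show lAct K L w b = y
        have hb1 : b = kAct K L (1 : MonoidAlgebra K (L ≃ₐ[K] L)) b := (kAct_one b).symm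
        rw [hwact, hb1, hfb, kAct_one]
    -- BACKWARD DIRECTION
    · rintro ⟨b, hb, hinj, hsurj⟩
      have hPsiInj : Function.Injective
          (fun h : HlambdaSub K L => lAct K L h.1 b) := by
        intro h h' hhh
        obtain ⟨c, hc0, hcB⟩ := scale_mem_l B hfrac hb₀B hb₀0 (h.1 - h'.1)
        have hmem : c • (h.1 - h'.1) ∈ Hlambda K L :=
          Hlambda.smul_mem c (((HlambdaSub K L).sub_mem h.2 h'.2 :
            h.1 - h'.1 ∈ HlambdaSub K L))
        have h0m : (0 : MonoidAlgebra L (L ≃ₐ[K] L)) ∈ Hlambda K L ∧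
            ∀ y ∈ B, lAct K L 0 y ∈ B :=
          ⟨Hlambda.zero_mem, fun y _ => by rw [lAct_zero]; exact B.zero_mem⟩
        have hhh' : lAct K L h.1 b = lAct K L h'.1 b := hhh
        have him : lAct K L (c • (h.1 - h'.1)) b = lAct K L 0 b := by
          rw [lAct_zero, lAct_smulK, lAct_sub, hhh', sub_self, smul_zero]
        have heq := hinj (a₁ := ⟨c • (h.1 - h'.1), hmem, hcB⟩) (a₂ := ⟨0, h0m⟩)
          (Subtype.ext him)
        have h1 : c • (h.1 - h'.1) = 0 := congrArg Subtype.val heq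
        rcases smul_eq_zero.mp h1 with hcc | hcc
        · exact absurd hcc hc0
        · exact Subtype.ext (sub_eq_zero.mp hcc)
      set Psi : HlambdaSub K L →ₗ[K] L :=
        { toFun := fun h => lAct K L h.1 b
          map_add' := fun h h' => lAct_add h.1 h'.1 b
          map_smul' := fun c h => lAct_smulK c h.1 b } with hPsi
      have hPsiSurj : Function.Surjective Psi := by
        rw [← LinearMap.range_eq_top]
        refine top_unique ?_
        rw [← hspan]
        refine Submodule.span_le.mpr fun y hy => ?_
        obtain ⟨a, ha⟩ := hsurj ⟨y, hy⟩
        exact ⟨⟨a.1, a.2.1⟩, congrArg Subtype.val ha⟩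
      set e2 := LinearEquiv.ofBijective Psi ⟨hPsiInj, hPsiSurj⟩ with he2
      refine ⟨b, hb, ?_, ?_⟩
      -- injectivity of the group algebra side map
      · intro z z' hzz
        have hval : kAct K L z.1 b = kAct K L z'.1 b := congrArg Subtype.val hzz
        apply Subtype.ext
        apply kA_injective (K := K) (L := L)
        apply LinearMap.ext
        intro x
        obtain ⟨h', hh'⟩ := hPsiSurj x
        have hh'' : lAct K L h'.1 b = x := hh'
        rw [kA_apply, kA_apply, ← hh'', kAct_lAct_comm h'.2 z.1 b,
          kAct_lAct_comm h'.2 z'.1 b, hval]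
      -- surjectivity of the group algebra side map
      · rintro ⟨y, hy⟩
        set Psiy : HlambdaSub K L →ₗ[K] L :=
          { toFun := fun h => lAct K L h.1 y
            map_add' := fun h h' => lAct_add h.1 h'.1 y
            map_smul' := fun c h => lAct_smulK c h.1 y } with hPsiy
        set f : L →ₗ[K] L := Psiy ∘ₗ e2.symm.toLinearMap with hf
        have hfb : ∀ h : HlambdaSub K L, f (lAct K L h.1 b) = lAct K L h.1 y := by
          intro h
          have h1 : lAct K L h.1 b = e2 h := rfl
          have h2 : e2.symm (e2 h) = h := e2.symm_apply_apply h
          show Psiy (e2.symm (lAct K L h.1 b)) = lAct K L h.1 y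
          rw [h1, h2]
          rfl
        have hfcomm : ∀ h ∈ Hlambda K L, ∀ x : L,
            f (lAct K L h x) = lAct K L h (f x) := by
          intro h hh x
          obtain ⟨h', hh'⟩ := hPsiSurj x
          have hh'' : lAct K L h'.1 b = x := hh'
          rw [← hh'', ← lAct_mul_of_mem h'.2 h b]
          have hmul : h * h'.1 ∈ Hlambda K L := Hlambda.mul_mem hh h'.2
          have := hfb ⟨h * h'.1, hmul⟩
          rw [this, lAct_mul_of_mem h'.2 h y, hfb h']
        obtain ⟨w, hw⟩ := lA_surjective (K := K) (L := L) f
        have hwact : ∀ x, lAct K L w x = f x := fun x => by rw [← lA_apply, hw]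
        have hcomm : ∀ h ∈ Hlambda K L, ∀ u : L,
            lAct K L w (lAct K L h u) = lAct K L h (lAct K L w u) := by
          intro h hh u
          rw [hwact, hwact, hfcomm h hh]
        have hrange : ∀ τ : L ≃ₐ[K] L, w.coeff τ ∈ Set.range (algebraMap K L) :=
          fun τ => mem_range_of_fixed fun ν => coeff_fixed w hcomm ν τ
        choose k hk using hrange
        set z : MonoidAlgebra K (L ≃ₐ[K] L) :=
          ∑ τ : L ≃ₐ[K] L, MonoidAlgebra.single τ⁻¹ (k τ) with hz
        have hzact : ∀ x, kAct K L z x = lAct K L w x := by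
          intro x
          rw [← kA_apply, hz, map_sum, LinearMap.sum_apply, lAct_sum_univ]
          refine Finset.sum_congr rfl fun τ _ => ?_
          rw [kA_apply, kAct_single, Algebra.smul_def, hk]
        have hzB : ∀ y' ∈ B, kAct K L z y' ∈ B := by
          intro y' hy'
          obtain ⟨a, ha⟩ := hsurj ⟨y', hy'⟩
          have hav : lAct K L a.1 b = y' := congrArg Subtype.val ha
          rw [← hav, hzact, hwact]
          have := hfb ⟨a.1, a.2.1⟩
          rw [this]
          exact a.2.2 y hy
        refine ⟨⟨z, hzB⟩, Subtype.ext ?_⟩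
        show kAct K L z b = y
        have hb1 : b = lAct K L (1 : MonoidAlgebra L (L ≃ₐ[K] L)) b := (lAct_one b).symm
        rw [hzact, hwact, hb1]
        have := hfb ⟨1, Hlambda.one_mem⟩
        rw [this, lAct_one]

end Main
end

section
/- For x ∈ L, the element f_x = ∑_{g∈G} g(x) u_g generates (GL)^G as a module over L[N]^G (i.e. the K-span of {h·f_x : h ∈ L[N]^G} equals (GL)^G) if and only if f_x generates GL as a module over L[N] (i.e. the L-span of {η·f_x : η ∈ N} equals GL). -/
open scoped Classical

/- `L/K` is a finite Galois extension with Galois group `G = L ≃ₐ[K] L`, and `N` is a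
subgroup of `Perm G`.  `GL = Map(G, L)` is identified with `G → L` (the idempotent `u_g`
being the indicator function of `g`), and `N` acts on `GL` by `η · u_g = u_{η(g)}`, so
that the group algebra `L[N]` acts on `GL` by
`(∑ c_η η) · f = ∑ c_η (g ↦ f (η⁻¹ g))`. -/
noncomputable def lNAct (K L : Type*) [Field K] [Field L] [Algebra K L]
    (N : Subgroup (Equiv.Perm (L ≃ₐ[K] L)))
    (z : MonoidAlgebra L N) (f : (L ≃ₐ[K] L) → L) : (L ≃ₐ[K] L) → L :=
  z.coeff.sum fun η c => c • fun g => f ((η : Equiv.Perm (L ≃ₐ[K] L))⁻¹ g)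

/- Assuming `N` is normalized by the image `λ(G)` of the left regular embedding
(`λ(σ) = Equiv.mulLeft σ`), `G` acts on `L[N]` by `σ ∗ (c η) = σ(c) (λ(σ) η λ(σ)⁻¹)`. -/
noncomputable def twistN (K L : Type*) [Field K] [Field L] [Algebra K L]
    (N : Subgroup (Equiv.Perm (L ≃ₐ[K] L)))
    (hnorm : ∀ (σ : L ≃ₐ[K] L), ∀ η ∈ N,
      Equiv.mulLeft σ * η * (Equiv.mulLeft σ)⁻¹ ∈ N)
    (σ : L ≃ₐ[K] L) (z : MonoidAlgebra L N) : MonoidAlgebra L N :=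
  z.coeff.sum fun η c =>
    MonoidAlgebra.single ⟨Equiv.mulLeft σ * (η : Equiv.Perm (L ≃ₐ[K] L)) *
      (Equiv.mulLeft σ)⁻¹, hnorm σ η η.2⟩ (σ c)

/- `L[N]^G`, the fixed points of `L[N]` under the twisted `G`-action. -/
def LNfixed (K L : Type*) [Field K] [Field L] [Algebra K L]
    (N : Subgroup (Equiv.Perm (L ≃ₐ[K] L)))
    (hnorm : ∀ (σ : L ≃ₐ[K] L), ∀ η ∈ N,
      Equiv.mulLeft σ * η * (Equiv.mulLeft σ)⁻¹ ∈ N) :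
    Set (MonoidAlgebra L N) :=
  {z | ∀ σ : L ≃ₐ[K] L, twistN K L N hnorm σ z = z}

/- `(GL)^G`, the fixed points of `GL = Map(G, L)` under the `G`-action
`σ ∗ (c u_g) = σ(c) u_{σ g}`, i.e. `(σ ∗ f)(g) = σ (f (σ⁻¹ g))`. -/
def GLfixed (K L : Type*) [Field K] [Field L] [Algebra K L] :
    Set ((L ≃ₐ[K] L) → L) :=
  {f | ∀ σ : L ≃ₐ[K] L, (fun g => σ (f (σ⁻¹ * g))) = f}

/- For `x ∈ L`, the element `f_x = ∑_{g ∈ G} g(x) u_g` of `GL`. -/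
noncomputable def fEl (K L : Type*) [Field K] [Field L] [Algebra K L] (x : L) :
    (L ≃ₐ[K] L) → L :=
  fun g => g x


section AuxLemmas

variable (K L : Type*) [Field K] [Field L] [Algebra K L]

lemma fEl_mem_GLfixed (x : L) : fEl K L x ∈ GLfixed K L := by
  intro σ
  funext g
  show σ ((σ⁻¹ * g) x) = g x
  rw [← AlgEquiv.mul_apply, mul_inv_cancel_left]

lemma mem_GLfixed_iff (f : (L ≃ₐ[K] L) → L) :
    f ∈ GLfixed K L ↔ f = fEl K L (f 1) := by
  constructor
  · intro hf
    funext g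
    have := congrFun (hf g) g
    simpa [fEl] using this.symm
  · intro hf
    rw [hf]
    exact fEl_mem_GLfixed K L _

lemma GLfixed_smul {c : K} {f : (L ≃ₐ[K] L) → L} (hf : f ∈ GLfixed K L) :
    c • f ∈ GLfixed K L := by
  intro σ
  funext g
  have := congrFun (hf σ) g
  simp only [Pi.smul_apply, Algebra.smul_def, map_mul, AlgEquiv.commutes]
  rw [this]

lemma GLfixed_add {f f' : (L ≃ₐ[K] L) → L} (hf : f ∈ GLfixed K L)
    (hf' : f' ∈ GLfixed K L) : f + f' ∈ GLfixed K L := by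
  intro σ
  funext g
  have h1 := congrFun (hf σ) g
  have h2 := congrFun (hf' σ) g
  simp only [Pi.add_apply, map_add]
  rw [h1, h2]

/-- `GLfixed` as a `K`-submodule. -/
noncomputable def GLfixedSub : Submodule K ((L ≃ₐ[K] L) → L) where
  carrier := GLfixed K L
  add_mem' := GLfixed_add K L
  zero_mem' := by intro σ; funext g; simp
  smul_mem' c f hf := GLfixed_smul K L hf

variable (N : Subgroup (Equiv.Perm (L ≃ₐ[K] L)))
    (hnorm : ∀ (σ : L ≃ₐ[K] L), ∀ η ∈ N,
      Equiv.mulLeft σ * η * (Equiv.mulLeft σ)⁻¹ ∈ N)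

lemma lNAct_single (η : N) (c : L) (f : (L ≃ₐ[K] L) → L) :
    lNAct K L N (MonoidAlgebra.single η c) f
      = c • fun g => f ((η : Equiv.Perm (L ≃ₐ[K] L))⁻¹ g) := by
  unfold lNAct
  rw [MonoidAlgebra.coeff_single, Finsupp.sum_single_index]
  simp

lemma lNAct_add (z w : MonoidAlgebra L N) (f : (L ≃ₐ[K] L) → L) :
    lNAct K L N (z + w) f = lNAct K L N z f + lNAct K L N w f := by
  unfold lNAct
  rw [MonoidAlgebra.coeff_add, Finsupp.sum_add_index] <;> intros <;> simp [add_smul]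

lemma lNAct_smul (c : L) (z : MonoidAlgebra L N) (f : (L ≃ₐ[K] L) → L) :
    lNAct K L N (c • z) f = c • lNAct K L N z f := by
  unfold lNAct
  rw [MonoidAlgebra.coeff_smul, Finsupp.sum_smul_index, Finsupp.smul_sum] <;> intros <;> simp [mul_smul]

/-- The `L`-linear map `z ↦ z · f`. -/
noncomputable def lNActMap (f : (L ≃ₐ[K] L) → L) :
    MonoidAlgebra L N →ₗ[L] ((L ≃ₐ[K] L) → L) where
  toFun z := lNAct K L N z f
  map_add' z w := lNAct_add K L N z w f
  map_smul' c z := lNAct_smul K L N c z f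

lemma twistN_single (σ : L ≃ₐ[K] L) (η : N) (c : L) :
    twistN K L N hnorm σ (MonoidAlgebra.single η c)
      = MonoidAlgebra.single ⟨Equiv.mulLeft σ * (η : Equiv.Perm (L ≃ₐ[K] L)) *
          (Equiv.mulLeft σ)⁻¹, hnorm σ η η.2⟩ (σ c) := by
  unfold twistN
  rw [MonoidAlgebra.coeff_single, Finsupp.sum_single_index]
  simp

lemma twistN_add (σ : L ≃ₐ[K] L) (z w : MonoidAlgebra L N) :
    twistN K L N hnorm σ (z + w) = twistN K L N hnorm σ z + twistN K L N hnorm σ w := by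
  unfold twistN
  rw [MonoidAlgebra.coeff_add, Finsupp.sum_add_index] <;> intros <;> simp [map_add, MonoidAlgebra.single_add]

/-- Equivariance: `(σ ∗ z) · (σ ∗ f) = σ ∗ (z · f)`. -/
lemma lNAct_twistN (σ : L ≃ₐ[K] L) (z : MonoidAlgebra L N) (f : (L ≃ₐ[K] L) → L) :
    lNAct K L N (twistN K L N hnorm σ z) (fun g => σ (f (σ⁻¹ * g)))
      = fun g => σ (lNAct K L N z f (σ⁻¹ * g)) := by
  induction z using MonoidAlgebra.induction_linear with
  | zero =>
    unfold twistN lNAct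
    simp
    rfl
  | add z w hz hw =>
    rw [twistN_add, lNAct_add, hz, hw, lNAct_add]
    funext g
    simp
  | single η c =>
    rw [twistN_single, lNAct_single, lNAct_single]
    funext g
    have hperm : ((⟨Equiv.mulLeft σ * (η : Equiv.Perm (L ≃ₐ[K] L)) *
        (Equiv.mulLeft σ)⁻¹, hnorm σ η η.2⟩ : N) : Equiv.Perm (L ≃ₐ[K] L))⁻¹ g
        = σ * ((η : Equiv.Perm (L ≃ₐ[K] L))⁻¹ (σ⁻¹ * g)) := by
      simp [mul_inv_rev, Equiv.Perm.mul_apply]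
    simp only [Pi.smul_apply, smul_eq_mul, hperm]
    rw [inv_mul_cancel_left]
    rw [← map_mul]

lemma lNAct_mem_GLfixed {h : MonoidAlgebra L N} (hh : h ∈ LNfixed K L N hnorm)
    {f : (L ≃ₐ[K] L) → L} (hf : f ∈ GLfixed K L) :
    lNAct K L N h f ∈ GLfixed K L := by
  intro σ
  have := lNAct_twistN K L N hnorm σ h f
  rw [hh σ, hf σ] at this
  exact this.symm

end AuxLemmas

section Span

variable (K L : Type*) [Field K] [Field L] [Algebra K L]
  [FiniteDimensional K L] [IsGalois K L]

omit [IsGalois K L] in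
/-- Galois descent for `GL`: the fixed elements `f_y` span `GL` over `L`. -/
lemma span_fEl_eq_top : Submodule.span L (Set.range (fEl K L)) = ⊤ := by
  by_contra hne
  obtain ⟨φ, hφ0, hφ⟩ := Submodule.exists_dual_map_eq_bot_of_lt_top
    (lt_top_iff_ne_top.mpr hne) inferInstance
  have hker : ∀ y : L, φ (fEl K L y) = 0 := by
    intro y
    have : φ (fEl K L y) ∈ Submodule.map φ (Submodule.span L (Set.range (fEl K L))) :=
      ⟨fEl K L y, Submodule.subset_span ⟨y, rfl⟩, rfl⟩
    rw [hφ] at this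
    exact (Submodule.mem_bot L).mp this
  have hLI : LinearIndependent L
      (fun g : L ≃ₐ[K] L => ((g : L →* L) : L → L)) := by
    refine (linearIndependent_monoidHom L L).comp (fun g : L ≃ₐ[K] L => (g : L →* L)) ?_
    intro g g' hgg'
    ext y
    exact DFunLike.congr_fun hgg' y
  have hc : ∀ g : L ≃ₐ[K] L, φ (Pi.single g 1) = 0 := by
    have key : ∑ g : L ≃ₐ[K] L, φ (Pi.single g 1) • ((g : L →* L) : L → L) = 0 := by
      funext y
      have h1 : fEl K L y = ∑ g : L ≃ₐ[K] L, (g y) • (Pi.single g 1 : (L ≃ₐ[K] L) → L) := by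
        funext g'
        rw [Fintype.sum_apply]
        simp [Pi.single_apply, fEl]
      have h2 := hker y
      rw [h1, map_sum] at h2
      simp only [map_smul] at h2
      rw [Fintype.sum_apply]
      simpa [mul_comm] using h2
    have := Fintype.linearIndependent_iff.mp hLI _ key
    exact this
  apply hφ0
  refine LinearMap.ext fun f => ?_
  show φ f = 0
  have hf : f = ∑ g : L ≃ₐ[K] L, (f g) • (Pi.single g 1 : (L ≃ₐ[K] L) → L) := by
    funext g'
    rw [Fintype.sum_apply]
    simp [Pi.single_apply]
  rw [hf, map_sum]
  simp only [map_smul, hc, smul_zero]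
  simp

end Span

/-- For a regular subgroup `N ≤ Perm G` normalized by `λ(G)` and `x ∈ L`,
the element `f_x` generates `(GL)^G` over `L[N]^G` (i.e. the `K`-span of
`{h · f_x : h ∈ L[N]^G}` equals `(GL)^G`) iff `f_x` generates `GL` over `L[N]`
(i.e. the `L`-span of `{η · f_x : η ∈ N}` equals `GL`). -/
theorem fixed_generator_iff_generator
    (K L : Type*) [Field K] [Field L] [Algebra K L]
    [FiniteDimensional K L] [IsGalois K L]
    (N : Subgroup (Equiv.Perm (L ≃ₐ[K] L)))
    (hreg : ∀ g h : L ≃ₐ[K] L, ∃! η : N, (η : Equiv.Perm (L ≃ₐ[K] L)) g = h)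
    (hnorm : ∀ (σ : L ≃ₐ[K] L), ∀ η ∈ N,
      Equiv.mulLeft σ * η * (Equiv.mulLeft σ)⁻¹ ∈ N)
    (x : L) :
    (Submodule.span K
        {w : (L ≃ₐ[K] L) → L |
          ∃ h ∈ LNfixed K L N hnorm, w = lNAct K L N h (fEl K L x)} :
        Set ((L ≃ₐ[K] L) → L)) = GLfixed K L ↔
      Submodule.span L
        {w : (L ≃ₐ[K] L) → L |
          ∃ η : N, w = fun g => fEl K L x ((η : Equiv.Perm (L ≃ₐ[K] L))⁻¹ g)} = ⊤ := by
  set S : Set ((L ≃ₐ[K] L) → L) :=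
    {w | ∃ h ∈ LNfixed K L N hnorm, w = lNAct K L N h (fEl K L x)} with hS
  set V : Set ((L ≃ₐ[K] L) → L) :=
    {w | ∃ η : N, w = fun g => fEl K L x ((η : Equiv.Perm (L ≃ₐ[K] L))⁻¹ g)} with hV
  set T := lNActMap K L N (fEl K L x) with hT
  have hTapp : ∀ z, T z = lNAct K L N z (fEl K L x) := fun z => rfl
  have hmem_span : ∀ z : MonoidAlgebra L N,
      lNAct K L N z (fEl K L x) ∈ Submodule.span L V := by
    intro z
    unfold lNAct
    rw [Finsupp.sum]
    apply Submodule.sum_mem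
    intro η hη
    exact Submodule.smul_mem _ _ (Submodule.subset_span ⟨η, rfl⟩)
  have hrange : LinearMap.range T = Submodule.span L V := by
    apply le_antisymm
    · rintro _ ⟨z, rfl⟩
      rw [hTapp]
      exact hmem_span z
    · rw [Submodule.span_le]
      rintro _ ⟨η, rfl⟩
      refine ⟨MonoidAlgebra.single η 1, ?_⟩
      rw [hTapp, lNAct_single]
      simp [fEl]
  constructor
  · -- fixed generator ⇒ generator
    intro hKspan
    rw [eq_top_iff, ← span_fEl_eq_top K L]
    rw [Submodule.span_le]
    rintro _ ⟨y, rfl⟩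
    have hy : fEl K L y ∈ (Submodule.span K S : Set ((L ≃ₐ[K] L) → L)) := by
      rw [hKspan]
      exact fEl_mem_GLfixed K L y
    have hSle : Submodule.span K S ≤
        (Submodule.span L V).restrictScalars K := by
      rw [Submodule.span_le]
      rintro _ ⟨h, hh, rfl⟩
      exact hmem_span h
    exact hSle hy
  · -- generator ⇒ fixed generator
    intro hLspan
    haveI : Fintype N := Fintype.ofFinite N
    have hcard : Fintype.card N = Fintype.card (L ≃ₐ[K] L) := by
      refine Fintype.card_of_bijective
        (f := fun η : N => (η : Equiv.Perm (L ≃ₐ[K] L)) 1) ⟨?_, ?_⟩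
      · intro a b hab
        obtain ⟨η, hη, huniq⟩ := hreg 1 ((a : Equiv.Perm (L ≃ₐ[K] L)) 1)
        exact (huniq a rfl).trans (huniq b hab.symm).symm
      · intro h
        obtain ⟨η, hη, -⟩ := hreg 1 h
        exact ⟨η, hη⟩
    haveI : Module.Finite L (MonoidAlgebra L N) :=
      Module.Finite.of_basis ((Finsupp.basisSingleOne (R := L) (ι := N)).map (MonoidAlgebra.coeffLinearEquiv L).symm)
    have hfr : Module.finrank L (MonoidAlgebra L N)
        = Module.finrank L ((L ≃ₐ[K] L) → L) := by
      have h1 : Module.finrank L ((N : Type _) →₀ L) = Fintype.card N :=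
        Module.finrank_eq_card_basis Finsupp.basisSingleOne
      have h2 : Module.finrank L (MonoidAlgebra L N) = Fintype.card N := (MonoidAlgebra.coeffLinearEquiv L).finrank_eq.trans h1
      rw [h2, Module.finrank_pi, hcard]
    have hsurjT : Function.Surjective T := by
      rw [← LinearMap.range_eq_top, hrange, hLspan]
    have hinjT : Function.Injective T :=
      (LinearMap.injective_iff_surjective_of_finrank_eq_finrank hfr).mpr hsurjT
    apply Set.Subset.antisymm
    · -- span K S ⊆ GLfixed
      have : Submodule.span K S ≤ GLfixedSub K L := by
        rw [Submodule.span_le]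
        rintro _ ⟨h, hh, rfl⟩
        exact lNAct_mem_GLfixed K L N hnorm hh (fEl_mem_GLfixed K L x)
      exact this
    · intro f hf
      obtain ⟨z, hz⟩ := hsurjT f
      rw [hTapp] at hz
      have hzfix : z ∈ LNfixed K L N hnorm := by
        intro σ
        apply hinjT
        rw [hTapp, hTapp]
        have heq := lNAct_twistN K L N hnorm σ z (fEl K L x)
        rw [fEl_mem_GLfixed K L x σ, hz] at heq
        rw [heq, hz, hf σ]
      exact Submodule.subset_span ⟨z, hzfix, hz.symm⟩
end

section
/- For x ∈ L, the element f_x = ∑_{g∈G} g(x) u_g generates GL as a module over L[N] if and only if the square matrix T_N(x), with rows indexed by η ∈ N, columns indexed by g ∈ G, and (η,g) entry the element (η(g))(x) of L (the Galois automorphism η(g) ∈ G applied to x), is nonsingular. -/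
open scoped Classical

lemma span_range_rows_eq_top_iff_det_ne_zero {m K : Type*} [Fintype m] [DecidableEq m]
    [Field K] (M : Matrix m m K) :
    Submodule.span K (Set.range M) = ⊤ ↔ M.det ≠ 0 := by
  change Submodule.span K (Set.range M.row) = ⊤ ↔ M.det ≠ 0
  rw [← range_vecMulLinear, LinearMap.range_eq_top]
  have : Function.Surjective M.vecMulLinear ↔ Function.Surjective M.vecMul := by
    simp only [Function.Surjective]
    constructor <;> intro h b <;> obtain ⟨a, ha⟩ := h b <;> exact ⟨a, ha⟩
  rw [this, Matrix.vecMul_surjective_iff_isUnit, Matrix.isUnit_iff_isUnit_det,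
    isUnit_iff_ne_zero]

/-- For a regular subgroup `N ≤ Perm G` normalized by `λ(G)` and `x ∈ L`,
the element `f_x` generates `GL` over `L[N]` iff the square matrix `T_N(x)` with rows
indexed by `η ∈ N`, columns indexed by `g ∈ G`, and `(η, g)` entry `(η(g))(x)` is
nonsingular (the matrix being squared up via a bijection `N ≃ G`, which exists by
regularity of `N`). -/
theorem generator_iff_TN_matrix_nonsingular
    (K L : Type*) [Field K] [Field L] [Algebra K L]
    [FiniteDimensional K L] [IsGalois K L]
    (N : Subgroup (Equiv.Perm (L ≃ₐ[K] L)))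
    (hreg : ∀ g h : L ≃ₐ[K] L, ∃! η : N, (η : Equiv.Perm (L ≃ₐ[K] L)) g = h)
    (hnorm : ∀ (σ : L ≃ₐ[K] L), ∀ η ∈ N,
      Equiv.mulLeft σ * η * (Equiv.mulLeft σ)⁻¹ ∈ N)
    (x : L) :
    Submodule.span L
        {w : (L ≃ₐ[K] L) → L |
          ∃ η : N, w = fun g => fEl K L x ((η : Equiv.Perm (L ≃ₐ[K] L))⁻¹ g)} = ⊤ ↔
      ∃ e : N ≃ (L ≃ₐ[K] L),
        (Matrix.of fun r g : L ≃ₐ[K] L =>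
          ((e.symm r : Equiv.Perm (L ≃ₐ[K] L)) g) x).det ≠ 0 := by
  classical
  -- the set of generators equals the range of `v`
  set v : N → (L ≃ₐ[K] L) → L := fun η => fun g => ((η : Equiv.Perm (L ≃ₐ[K] L)) g) x with hv
  have hS : {w : (L ≃ₐ[K] L) → L |
        ∃ η : N, w = fun g => fEl K L x ((η : Equiv.Perm (L ≃ₐ[K] L))⁻¹ g)} = Set.range v := by
    ext w
    constructor
    · rintro ⟨η, rfl⟩
      exact ⟨η⁻¹, by funext g; simp [hv, fEl]⟩
    · rintro ⟨η, rfl⟩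
      exact ⟨η⁻¹, by funext g; simp [hv, fEl]⟩
  have key : ∀ e : N ≃ (L ≃ₐ[K] L),
      Set.range (fun r : L ≃ₐ[K] L => fun g => ((e.symm r : Equiv.Perm (L ≃ₐ[K] L)) g) x)
        = Set.range v := by
    intro e
    have : (fun r : L ≃ₐ[K] L => fun g => ((e.symm r : Equiv.Perm (L ≃ₐ[K] L)) g) x)
        = v ∘ e.symm := rfl
    rw [this, Set.range_comp, e.symm.surjective.range_eq, Set.image_univ]
  rw [hS]
  constructor
  · intro hspan
    -- construct a bijection `N ≃ G` from regularity
    have hbij : Function.Bijective (fun η : N => (η : Equiv.Perm (L ≃ₐ[K] L)) 1) := by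
      constructor
      · intro a b hab
        obtain ⟨η, -, huniq⟩ := hreg 1 ((a : Equiv.Perm (L ≃ₐ[K] L)) 1)
        exact (huniq a rfl).trans (huniq b hab.symm).symm
      · intro h
        obtain ⟨η, hη, -⟩ := hreg 1 h
        exact ⟨η, hη⟩
    refine ⟨Equiv.ofBijective _ hbij, ?_⟩
    rw [← span_range_rows_eq_top_iff_det_ne_zero]
    have := key (Equiv.ofBijective _ hbij)
    rw [show Set.range (Matrix.of fun r g : L ≃ₐ[K] L =>
        (((Equiv.ofBijective _ hbij).symm r : Equiv.Perm (L ≃ₐ[K] L)) g) x)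
      = Set.range (fun r : L ≃ₐ[K] L => fun g =>
        (((Equiv.ofBijective _ hbij).symm r : Equiv.Perm (L ≃ₐ[K] L)) g) x) from rfl, this]
    exact hspan
  · rintro ⟨e, hdet⟩
    rw [← key e]
    rw [← span_range_rows_eq_top_iff_det_ne_zero] at hdet
    exact hdet
end

section
/- Let x ∈ L be such that {σ(x) : σ ∈ G} is a K-basis of L, and let x̂ ∈ L satisfy Tr_{L/K}(x̂ · τ(x)) = δ_{1,τ} for all τ ∈ G. Then for every a ∈ L, ∑_{g∈G} ( ∑_{ρ∈G} ρ(a) · (g⁻¹ρ)(x̂) ) · g⁻¹(x) = a. Equivalently, the element h = ∑_{g∈G} (∑_{ρ∈G} ρ(a)(g⁻¹ρ)(x̂)) g of L[G] satisfies h·x = a under the action (∑_τ c_τ τ)·x = ∑_τ c_τ τ⁻¹(x). -/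
open scoped Classical

/-- If `{σ(x) : σ ∈ G}` is a `K`-basis of `L` and `x̂ ∈ L` satisfies
`Tr_{L/K}(x̂ · τ(x)) = δ_{1,τ}` for all `τ ∈ G`, then for every `a ∈ L` we have
`∑_{g ∈ G} (∑_{ρ ∈ G} ρ(a) (g⁻¹ρ)(x̂)) · g⁻¹(x) = a`; equivalently, the element
`h = ∑_{g ∈ G} (∑_{ρ ∈ G} ρ(a) (g⁻¹ρ)(x̂)) g` of `L[G]` satisfies `h · x = a`. -/
theorem sum_element_acts_as_expected
    (K L : Type*) [Field K] [Field L] [Algebra K L]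
    [FiniteDimensional K L] [IsGalois K L]
    (x xhat : L)
    (hbasis : ∃ b : Module.Basis (L ≃ₐ[K] L) K L, ∀ σ : L ≃ₐ[K] L, b σ = σ x)
    (hdual : ∀ τ : L ≃ₐ[K] L,
      ∑ g : L ≃ₐ[K] L, g (xhat * τ x) = if τ = 1 then 1 else 0) :
    ∀ a : L,
      (∑ g : L ≃ₐ[K] L, (∑ ρ : L ≃ₐ[K] L, ρ a * (g⁻¹ * ρ) xhat) * g⁻¹ x = a) ∧
      lAct K L
          (∑ g : L ≃ₐ[K] L,
            MonoidAlgebra.single g (∑ ρ : L ≃ₐ[K] L, ρ a * (g⁻¹ * ρ) xhat)) x = a := by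
  intro a
  have key : ∑ g : L ≃ₐ[K] L, (∑ ρ : L ≃ₐ[K] L, ρ a * (g⁻¹ * ρ) xhat) * g⁻¹ x = a := by
    have h1 : ∀ g ρ : L ≃ₐ[K] L, (ρ a * (g⁻¹ * ρ) xhat) * g⁻¹ x
        = ρ a * g⁻¹ (ρ xhat * x) := by
      intro g ρ
      rw [map_mul, AlgEquiv.mul_apply]
      ring
    calc ∑ g : L ≃ₐ[K] L, (∑ ρ : L ≃ₐ[K] L, ρ a * (g⁻¹ * ρ) xhat) * g⁻¹ x
        = ∑ g : L ≃ₐ[K] L, ∑ ρ : L ≃ₐ[K] L, ρ a * g⁻¹ (ρ xhat * x) := by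
          simp_rw [Finset.sum_mul, h1]
      _ = ∑ ρ : L ≃ₐ[K] L, ρ a * ∑ g : L ≃ₐ[K] L, g⁻¹ (ρ xhat * x) := by
          rw [Finset.sum_comm]; simp_rw [Finset.mul_sum]
      _ = ∑ ρ : L ≃ₐ[K] L, ρ a * ∑ g : L ≃ₐ[K] L, g (ρ xhat * x) := by
          refine Finset.sum_congr rfl fun ρ _ => ?_
          congr 1
          exact Fintype.sum_equiv (Equiv.inv _) _ _ (fun g => rfl)
      _ = ∑ ρ : L ≃ₐ[K] L, ρ a * ∑ g : L ≃ₐ[K] L, g (xhat * ρ⁻¹ x) := by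
          refine Finset.sum_congr rfl fun ρ _ => ?_
          congr 1
          refine Fintype.sum_equiv (Equiv.mulRight ρ) _ _ (fun g => ?_)
          have hx : ρ (ρ⁻¹ x) = x := by
            rw [← AlgEquiv.mul_apply, mul_inv_cancel]; rfl
          simp [AlgEquiv.mul_apply, map_mul, hx, mul_comm]
      _ = ∑ ρ : L ≃ₐ[K] L, ρ a * (if ρ = 1 then 1 else 0) := by
          simp_rw [hdual, inv_eq_one]
      _ = a := by simp
  refine ⟨key, ?_⟩
  have hswap := Finsupp.sum_finset_sum_index (s := Finset.univ)
    (g := fun g : L ≃ₐ[K] L =>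
      Finsupp.single g (∑ ρ : L ≃ₐ[K] L, ρ a * (g⁻¹ * ρ) xhat))
    (h := fun τ c => c * τ⁻¹ x)
    (fun τ => zero_mul _) (fun τ b c => add_mul b c _)
  rw [lAct, MonoidAlgebra.coeff_sum]
  simp_rw [MonoidAlgebra.coeff_single]
  rw [← hswap]
  refine (Finset.sum_congr rfl fun g _ => ?_).trans key
  exact Finsupp.sum_single_index (h := fun (τ : L ≃ₐ[K] L) (c : L) => c * τ⁻¹ x) (zero_mul _)
end
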